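/- The reciprocals of the two circumradii satisfy (1 / dist O O₁)² + (1 / dist O O₂)² = (4 / α)², where α = dist B Γ; i.e., there is a right triangle with legs 1/R₁, 1/R₂ and hypotenuse 1/(α/4). -/

import Mathlib

open EuclideanGeometry

theorem reciprocal_radii_pythagorean (A B Γ O O₁ O₂ : EuclideanSpace ℝ (Fin 2))
    (hAB : A ≠ B) (hAΓ : A ≠ Γ)
    (hright : inner ℝ (B - A) (Γ - A) = (0 : ℝ))
    (hO : O = midpoint ℝ B Γ)
    (h1 : dist O₁ A = dist O₁ O) (h1' : dist O₁ O = dist O₁ B)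
    (h2 : dist O₂ A = dist O₂ O) (h2' : dist O₂ O = dist O₂ Γ) :
    (1 / dist O O₁) ^ 2 + (1 / dist O O₂) ^ 2 = (4 / dist B Γ) ^ 2 := by
  have key : ∀ P Q : EuclideanSpace ℝ (Fin 2),
      dist P Q ^ 2 = (P 0 - Q 0)^2 + (P 1 - Q 1)^2 := by
    intro P Q
    rw [EuclideanSpace.dist_eq, Real.sq_sqrt (by positivity)]
    simp [Fin.sum_univ_two, Real.dist_eq, sq_abs]
  have hO0 : O 0 = (B 0 + Γ 0)/2 := by rw [hO]; simp [midpoint_eq_smul_add]; ring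
  have hO1 : O 1 = (B 1 + Γ 1)/2 := by rw [hO]; simp [midpoint_eq_smul_add]; ring
  have hwc : (((B 0)-(A 0))*((Γ 0)-(A 0))+((B 1)-(A 1))*((Γ 1)-(A 1))) = 0 := by
    rw [← hright]; simp [PiLp.inner_apply, Fin.sum_univ_two]; ring
  have hE1c : (((O₁ 0)-(A 0))^2+((O₁ 1)-(A 1))^2) = (((O₁ 0)-((B 0)+(Γ 0))/2)^2+((O₁ 1)-((B 1)+(Γ 1))/2)^2) := by
    have h : dist O₁ A ^ 2 = dist O₁ O ^ 2 := by rw [h1]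
    rw [key, key, hO0, hO1] at h
    exact h
  have hE2c : (((O₁ 0)-((B 0)+(Γ 0))/2)^2+((O₁ 1)-((B 1)+(Γ 1))/2)^2) = (((O₁ 0)-(B 0))^2+((O₁ 1)-(B 1))^2) := by
    have h : dist O₁ O ^ 2 = dist O₁ B ^ 2 := by rw [h1']
    rw [key, key, hO0, hO1] at h
    exact h
  have hE3c : (((O₂ 0)-(A 0))^2+((O₂ 1)-(A 1))^2) = (((O₂ 0)-((B 0)+(Γ 0))/2)^2+((O₂ 1)-((B 1)+(Γ 1))/2)^2) := by
    have h : dist O₂ A ^ 2 = dist O₂ O ^ 2 := by rw [h2]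
    rw [key, key, hO0, hO1] at h
    exact h
  have hE4c : (((O₂ 0)-((B 0)+(Γ 0))/2)^2+((O₂ 1)-((B 1)+(Γ 1))/2)^2) = (((O₂ 0)-(Γ 0))^2+((O₂ 1)-(Γ 1))^2) := by
    have h : dist O₂ O ^ 2 = dist O₂ Γ ^ 2 := by rw [h2']
    rw [key, key, hO0, hO1] at h
    exact h
  -- nondegeneracy
  have hpd : dist A B ^ 2 = (((B 0)-(A 0))^2+((B 1)-(A 1))^2) := by rw [key]; ring
  have hqd : dist A Γ ^ 2 = (((Γ 0)-(A 0))^2+((Γ 1)-(A 1))^2) := by rw [key]; ring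
  have hppos : (0:ℝ) < (((B 0)-(A 0))^2+((B 1)-(A 1))^2) := by rw [← hpd]; exact pow_pos (dist_pos.mpr hAB) 2
  have hqpos : (0:ℝ) < (((Γ 0)-(A 0))^2+((Γ 1)-(A 1))^2) := by rw [← hqd]; exact pow_pos (dist_pos.mpr hAΓ) 2
  -- the circumcenter inner-product relations
  have hxu : (((O₁ 0)-(A 0))*((B 0)-(A 0))+((O₁ 1)-(A 1))*((B 1)-(A 1))) = (((B 0)-(A 0))^2+((B 1)-(A 1))^2)/2 := by linear_combination hE1c/2 + hE2c/2
  have hxv : (((O₁ 0)-(A 0))*((Γ 0)-(A 0))+((O₁ 1)-(A 1))*((Γ 1)-(A 1))) = ((((Γ 0)-(A 0))^2+((Γ 1)-(A 1))^2)-(((B 0)-(A 0))^2+((B 1)-(A 1))^2))/4 := by linear_combination hE1c/2 - hE2c/2 + hwc/2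
  have hyv : (((O₂ 0)-(A 0))*((Γ 0)-(A 0))+((O₂ 1)-(A 1))*((Γ 1)-(A 1))) = (((Γ 0)-(A 0))^2+((Γ 1)-(A 1))^2)/2 := by linear_combination hE3c/2 + hE4c/2
  have hyu : (((O₂ 0)-(A 0))*((B 0)-(A 0))+((O₂ 1)-(A 1))*((B 1)-(A 1))) = ((((B 0)-(A 0))^2+((B 1)-(A 1))^2)-(((Γ 0)-(A 0))^2+((Γ 1)-(A 1))^2))/4 := by linear_combination hE3c/2 - hE4c/2 + hwc/2
  -- key circumradius equations (Gram determinant identity in 2D)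
  have hmain1 : (((B 0)-(A 0))^2+((B 1)-(A 1))^2) * (16*(((Γ 0)-(A 0))^2+((Γ 1)-(A 1))^2)*(((O₁ 0)-((B 0)+(Γ 0))/2)^2+((O₁ 1)-((B 1)+(Γ 1))/2)^2)) = (((B 0)-(A 0))^2+((B 1)-(A 1))^2) * (((((B 0)-(A 0))^2+((B 1)-(A 1))^2)+(((Γ 0)-(A 0))^2+((Γ 1)-(A 1))^2))^2) := by
    linear_combination (-16*(((B 0)-(A 0))^2+((B 1)-(A 1))^2)*(((Γ 0)-(A 0))^2+((Γ 1)-(A 1))^2))*hE1c + (16*(((Γ 0)-(A 0))^2+((Γ 1)-(A 1))^2)*((((O₁ 0)-(A 0))*((B 0)-(A 0))+((O₁ 1)-(A 1))*((B 1)-(A 1)))+(((B 0)-(A 0))^2+((B 1)-(A 1))^2)/2))*hxu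
      + (16*(((B 0)-(A 0))^2+((B 1)-(A 1))^2)*((((O₁ 0)-(A 0))*((Γ 0)-(A 0))+((O₁ 1)-(A 1))*((Γ 1)-(A 1)))+((((Γ 0)-(A 0))^2+((Γ 1)-(A 1))^2)-(((B 0)-(A 0))^2+((B 1)-(A 1))^2))/4))*hxv + (16*((((B 0)-(A 0))*((Γ 0)-(A 0))+((B 1)-(A 1))*((Γ 1)-(A 1)))*(((O₁ 0)-(A 0))^2+((O₁ 1)-(A 1))^2) - 2*(((O₁ 0)-(A 0))*((B 0)-(A 0))+((O₁ 1)-(A 1))*((B 1)-(A 1)))*(((O₁ 0)-(A 0))*((Γ 0)-(A 0))+((O₁ 1)-(A 1))*((Γ 1)-(A 1)))))*hwc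
  have hmain2 : (((Γ 0)-(A 0))^2+((Γ 1)-(A 1))^2) * (16*(((B 0)-(A 0))^2+((B 1)-(A 1))^2)*(((O₂ 0)-((B 0)+(Γ 0))/2)^2+((O₂ 1)-((B 1)+(Γ 1))/2)^2)) = (((Γ 0)-(A 0))^2+((Γ 1)-(A 1))^2) * (((((B 0)-(A 0))^2+((B 1)-(A 1))^2)+(((Γ 0)-(A 0))^2+((Γ 1)-(A 1))^2))^2) := by
    linear_combination (-16*(((B 0)-(A 0))^2+((B 1)-(A 1))^2)*(((Γ 0)-(A 0))^2+((Γ 1)-(A 1))^2))*hE3c + (16*(((B 0)-(A 0))^2+((B 1)-(A 1))^2)*((((O₂ 0)-(A 0))*((Γ 0)-(A 0))+((O₂ 1)-(A 1))*((Γ 1)-(A 1)))+(((Γ 0)-(A 0))^2+((Γ 1)-(A 1))^2)/2))*hyv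
      + (16*(((Γ 0)-(A 0))^2+((Γ 1)-(A 1))^2)*((((O₂ 0)-(A 0))*((B 0)-(A 0))+((O₂ 1)-(A 1))*((B 1)-(A 1)))+((((B 0)-(A 0))^2+((B 1)-(A 1))^2)-(((Γ 0)-(A 0))^2+((Γ 1)-(A 1))^2))/4))*hyu + (16*((((B 0)-(A 0))*((Γ 0)-(A 0))+((B 1)-(A 1))*((Γ 1)-(A 1)))*(((O₂ 0)-(A 0))^2+((O₂ 1)-(A 1))^2) - 2*(((O₂ 0)-(A 0))*((B 0)-(A 0))+((O₂ 1)-(A 1))*((B 1)-(A 1)))*(((O₂ 0)-(A 0))*((Γ 0)-(A 0))+((O₂ 1)-(A 1))*((Γ 1)-(A 1)))))*hwc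
  have hQ16 : 16*(((Γ 0)-(A 0))^2+((Γ 1)-(A 1))^2)*(((O₁ 0)-((B 0)+(Γ 0))/2)^2+((O₁ 1)-((B 1)+(Γ 1))/2)^2) = ((((B 0)-(A 0))^2+((B 1)-(A 1))^2)+(((Γ 0)-(A 0))^2+((Γ 1)-(A 1))^2))^2 := mul_left_cancel₀ (ne_of_gt hppos) hmain1
  have hS16 : 16*(((B 0)-(A 0))^2+((B 1)-(A 1))^2)*(((O₂ 0)-((B 0)+(Γ 0))/2)^2+((O₂ 1)-((B 1)+(Γ 1))/2)^2) = ((((B 0)-(A 0))^2+((B 1)-(A 1))^2)+(((Γ 0)-(A 0))^2+((Γ 1)-(A 1))^2))^2 := mul_left_cancel₀ (ne_of_gt hqpos) hmain2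
  -- translate distances in the goal
  have hd1sq : dist O O₁ ^ 2 = (((O₁ 0)-((B 0)+(Γ 0))/2)^2+((O₁ 1)-((B 1)+(Γ 1))/2)^2) := by rw [key, hO0, hO1]; ring
  have hd2sq : dist O O₂ ^ 2 = (((O₂ 0)-((B 0)+(Γ 0))/2)^2+((O₂ 1)-((B 1)+(Γ 1))/2)^2) := by rw [key, hO0, hO1]; ring
  have hBΓ : dist B Γ ^ 2 = (((B 0)-(A 0))^2+((B 1)-(A 1))^2) + (((Γ 0)-(A 0))^2+((Γ 1)-(A 1))^2) := by rw [key]; linear_combination (-2)*hwc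
  have hrEpos : (0:ℝ) < (((O₁ 0)-((B 0)+(Γ 0))/2)^2+((O₁ 1)-((B 1)+(Γ 1))/2)^2) := by
    rw [← hd1sq]
    have hO1O : O₁ ≠ O := by
      intro h
      apply hAB
      have hA0 : dist O₁ A = 0 := by rw [h1, h, dist_self]
      have hB0 : dist O₁ B = 0 := by rw [← h1', h, dist_self]
      rw [← dist_eq_zero.mp hA0, dist_eq_zero.mp hB0]
    exact pow_pos (dist_pos.mpr (Ne.symm hO1O)) 2
  have hsEpos : (0:ℝ) < (((O₂ 0)-((B 0)+(Γ 0))/2)^2+((O₂ 1)-((B 1)+(Γ 1))/2)^2) := by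
    rw [← hd2sq]
    have hO2O : O₂ ≠ O := by
      intro h
      apply hAΓ
      have hA0 : dist O₂ A = 0 := by rw [h2, h, dist_self]
      have hC0 : dist O₂ Γ = 0 := by rw [← h2', h, dist_self]
      rw [← dist_eq_zero.mp hA0, dist_eq_zero.mp hC0]
    exact pow_pos (dist_pos.mpr (Ne.symm hO2O)) 2
  have hsum_pos : (0:ℝ) < (((B 0)-(A 0))^2+((B 1)-(A 1))^2) + (((Γ 0)-(A 0))^2+((Γ 1)-(A 1))^2) := by linarith
  have hgoal : (1 / dist O O₁) ^ 2 + (1 / dist O O₂) ^ 2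
      = 1 / ((((O₁ 0)-((B 0)+(Γ 0))/2)^2+((O₁ 1)-((B 1)+(Γ 1))/2)^2)) + 1 / ((((O₂ 0)-((B 0)+(Γ 0))/2)^2+((O₂ 1)-((B 1)+(Γ 1))/2)^2)) := by
    rw [div_pow, div_pow, one_pow, hd1sq, hd2sq]
  have hgoal2 : (4 / dist B Γ) ^ 2 = 16 / ((((B 0)-(A 0))^2+((B 1)-(A 1))^2) + (((Γ 0)-(A 0))^2+((Γ 1)-(A 1))^2)) := by
    rw [div_pow, hBΓ]; norm_num
  have hrEv : (((O₁ 0)-((B 0)+(Γ 0))/2)^2+((O₁ 1)-((B 1)+(Γ 1))/2)^2) = ((((B 0)-(A 0))^2+((B 1)-(A 1))^2)+(((Γ 0)-(A 0))^2+((Γ 1)-(A 1))^2))^2 / (16*(((Γ 0)-(A 0))^2+((Γ 1)-(A 1))^2)) := by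
    rw [eq_div_iff (by positivity)]
    linear_combination hQ16
  have hsEv : (((O₂ 0)-((B 0)+(Γ 0))/2)^2+((O₂ 1)-((B 1)+(Γ 1))/2)^2) = ((((B 0)-(A 0))^2+((B 1)-(A 1))^2)+(((Γ 0)-(A 0))^2+((Γ 1)-(A 1))^2))^2 / (16*(((B 0)-(A 0))^2+((B 1)-(A 1))^2)) := by
    rw [eq_div_iff (by positivity)]
    linear_combination hS16
  rw [hgoal, hgoal2, hrEv, hsEv, one_div_div, one_div_div, ← add_div,
    div_eq_div_iff (pow_pos hsum_pos 2).ne' hsum_pos.ne']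
  ring
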